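/- Let P and S be strings of equal length m, let 1 ≤ i < j ≤ m be matches, and suppose there is no match k with i < k < j. Then: (a) j − i is the length of the shortest period of P[1, j], i.e., P[1,j] has period j − i and has no period of length p with 1 ≤ p < j − i; (b) for every k with j ≤ 2k and k ≤ j, k is a match if and only if k = j − (j − i)·x for some natural number x. -/
import Mathlib


/-- **Consecutive matches give the shortest period and an arithmetic
progression of matches.**
`P` and `S` are strings of length `m`, modeled as functions `ℕ → Alph` on
1-indexed positions.  An integer `k ∈ [0,m]` is a *match* if
`P[1,k] = S[m−k+1, m]`, i.e. `∀ t < k, P (1+t) = S (m−k+1+t)`.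
Let `1 ≤ i < j ≤ m` be matches with no match strictly between them.  Then
(a) `j − i` is the length of the shortest period of `P[1,j]`, and
(b) for every `k` with `j ≤ 2k` and `k ≤ j`, `k` is a match iff
`k = j − (j−i)·x` for some natural number `x`. -/
theorem consecutive_matches_progression {Alph : Type*} (P S : ℕ → Alph)
    (m i j : ℕ) (hi1 : 1 ≤ i) (hij : i < j) (hjm : j ≤ m)
    (hmatchi : ∀ t < i, P (1 + t) = S (m - i + 1 + t))
    (hmatchj : ∀ t < j, P (1 + t) = S (m - j + 1 + t))
    (hnone : ∀ k, i < k → k < j → ¬ (∀ t < k, P (1 + t) = S (m - k + 1 + t))) :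
    -- (a) `j − i` is a period of `P[1,j]` …
    ((∀ t, 1 ≤ t → t ≤ i → P t = P (t + (j - i))) ∧
      -- … and no shorter period exists
      (∀ p, 1 ≤ p → p < j - i →
        ¬ (∀ t, 1 ≤ t → t + p ≤ j → P t = P (t + p)))) ∧
    -- (b)
    (∀ k, j ≤ 2 * k → k ≤ j →
      ((∀ t < k, P (1 + t) = S (m - k + 1 + t)) ↔
        ∃ x : ℕ, k = j - (j - i) * x)) := by
  set d := j - i with hd
  have hd1 : 1 ≤ d := by omega
  -- `d` is a period of `P[1,j]`
  have Per : ∀ s, 1 ≤ s → s + d ≤ j → P s = P (s + d) := by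
    intro s hs1 hsj
    have h1 : P s = S (m - i + 1 + (s - 1)) := by
      have h := hmatchi (s - 1) (by omega)
      have e : 1 + (s - 1) = s := by omega
      rw [e] at h; exact h
    have h2 : P (s + d) = S (m - j + 1 + (s + d - 1)) := by
      have h := hmatchj (s + d - 1) (by omega)
      have e : 1 + (s + d - 1) = s + d := by omega
      rw [e] at h; exact h
    have e : m - i + 1 + (s - 1) = m - j + 1 + (s + d - 1) := by omega
    rw [h1, h2, e]
  -- multiples of a period
  have PerMul : ∀ x s, 1 ≤ s → s + d * x ≤ j → P s = P (s + d * x) := by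
    intro x
    induction x with
    | zero => intro s _ _; simp
    | succ n ih =>
      intro s hs1 hsj
      have hmul : d * (n + 1) = d * n + d := by ring
      have h1 : P s = P (s + d) := Per s hs1 (by omega)
      have h2 : P (s + d) = P (s + d + d * n) := ih (s + d) (by omega) (by omega)
      have e : s + d + d * n = s + d * (n + 1) := by omega
      rw [h1, h2, e]
  -- minimality of the period
  have hmin : ∀ p, 1 ≤ p → p < d →
      ¬ (∀ s, 1 ≤ s → s + p ≤ j → P s = P (s + p)) := by
    intro p hp1 hpd hper
    refine hnone (j - p) (by omega) (by omega) ?_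
    intro t ht
    have h2 : P (1 + t + p) = S (m - j + 1 + (t + p)) := by
      have h := hmatchj (t + p) (by omega)
      have e : 1 + (t + p) = 1 + t + p := by omega
      rw [e] at h; exact h
    have e : m - (j - p) + 1 + t = m - j + 1 + (t + p) := by omega
    rw [e, ← h2]
    exact hper (1 + t) (by omega) (by omega)
  -- match characterization via periods
  have MatchIff : ∀ k, k ≤ j →
      ((∀ t < k, P (1 + t) = S (m - k + 1 + t)) ↔
       (∀ t < k, P (1 + t) = P (1 + t + (j - k)))) := by
    intro k hkj
    have key : ∀ t < k, S (m - k + 1 + t) = P (1 + t + (j - k)) := by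
      intro t ht
      have h := hmatchj (t + (j - k)) (by omega)
      have e1 : 1 + (t + (j - k)) = 1 + t + (j - k) := by omega
      have e2 : m - j + 1 + (t + (j - k)) = m - k + 1 + t := by omega
      rw [e1, e2] at h
      exact h.symm
    constructor
    · intro h t ht; rw [h t ht, key t ht]
    · intro h t ht; rw [h t ht, ← key t ht]
  -- Euclid-style: any period `q` with `2q ≤ j` is a multiple of `d`
  have Ddvd : ∀ q, 2 * q ≤ j →
      (∀ s, 1 ≤ s → s + q ≤ j → P s = P (s + q)) → d ∣ q := by
    intro q
    induction q using Nat.strong_induction_on with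
    | _ q ih =>
      intro h2q hper
      rcases Nat.eq_zero_or_pos q with h0 | hq1
      · simp [h0]
      rcases lt_or_ge q d with hlt | hge
      · exact absurd hper (hmin q hq1 hlt)
      · have hsub : ∀ s, 1 ≤ s → s + (q - d) ≤ j → P s = P (s + (q - d)) := by
          intro s hs1 hsj
          rcases le_or_gt (s + q) j with hle | hgt
          · have h1 : P s = P (s + q) := hper s hs1 hle
            have h2 : P (s + (q - d)) = P (s + (q - d) + d) :=
              Per (s + (q - d)) (by omega) (by omega)
            have e : s + (q - d) + d = s + q := by omega
            rw [h1, h2, e]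
          · have h1 : P (s - d) = P (s - d + d) := Per (s - d) (by omega) (by omega)
            have h2 : P (s - d) = P (s - d + q) := hper (s - d) (by omega) (by omega)
            have e1 : s - d + d = s := by omega
            have e2 : s - d + q = s + (q - d) := by omega
            rw [e1] at h1
            rw [e2] at h2
            rw [← h1, h2]
        have hdvd : d ∣ (q - d) := ih (q - d) (by omega) (by omega) hsub
        obtain ⟨c, hc⟩ := hdvd
        refine ⟨c + 1, ?_⟩
        have e : d * (c + 1) = d * c + d := by ring
        omega
  refine ⟨⟨?_, ?_⟩, ?_⟩
  · intro t ht1 hti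
    exact Per t ht1 (by omega)
  · intro p hp1 hpd
    exact hmin p hp1 hpd
  · intro k hk2 hkj
    rw [MatchIff k hkj]
    constructor
    · intro h
      have hper : ∀ s, 1 ≤ s → s + (j - k) ≤ j → P s = P (s + (j - k)) := by
        intro s hs1 hsj
        have hh := h (s - 1) (by omega)
        have e1 : 1 + (s - 1) = s := by omega
        rw [e1] at hh
        exact hh
      obtain ⟨x, hx⟩ := Ddvd (j - k) (by omega) hper
      exact ⟨x, by omega⟩
    · rintro ⟨x, hx⟩ t ht
      have hdx : d * x ≤ j := by
        by_contra hc
        push_neg at hc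
        omega
      have hh := PerMul x (1 + t) (by omega) (by omega)
      have e : 1 + t + d * x = 1 + t + (j - k) := by omega
      rw [e] at hh
      exact hh
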